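/- arXiv:2305.18440 — 6 statements merged into one kernel-verified Lean document; each statement's English description precedes it below -/
import Mathlib

section
/- Let f : ℝ^M → ℝ be continuously differentiable, let F(x, y) = f(x) − y, and let Q be a probability measure on ℝ^M × ℝ whose marginal on ℝ^M is P. Assume that (x⁰, y⁰) ↦ IG_i(x^t, y^t | x⁰, y⁰) is Q-integrable. Then the expected integrated gradient of F with respect to the i-th input coordinate, EIG_i(x^t, y^t) := ∫ IG_i(x^t, y^t | x⁰, y⁰) dQ(x⁰, y⁰), equals EIG_i(x^t), the expected integrated gradient of f with respect to P. In particular EIG_i(x^t, y^t) does not depend on y^t (EIG is deviation-agnostic). -/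
open MeasureTheory Finset

/-- Partial derivative of `f : ℝ^M → ℝ` with respect to the `i`-th coordinate. -/
noncomputable def partialDeriv' {M : ℕ} (f : (Fin M → ℝ) → ℝ) (i : Fin M) (x : Fin M → ℝ) : ℝ :=
  fderiv ℝ f x (Pi.single i 1)

/-- Integrated gradient of `f` at test point `xt` with baseline `x0`, coordinate `i`. -/
noncomputable def IG {M : ℕ} (f : (Fin M → ℝ) → ℝ) (xt x0 : Fin M → ℝ) (i : Fin M) : ℝ :=
  (xt i - x0 i) * ∫ α in (0:ℝ)..1, partialDeriv' f i (x0 + α • (xt - x0))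

/-- Expected integrated gradient of `f` with respect to a measure `P` on the baselines. -/
noncomputable def EIG {M : ℕ} (f : (Fin M → ℝ) → ℝ) (P : Measure (Fin M → ℝ))
    (xt : Fin M → ℝ) (i : Fin M) : ℝ :=
  ∫ x0, IG f xt x0 i ∂P

/-- Integrated gradient, with respect to the `i`-th input coordinate, of the deviation
function `F(x, y) = f(x) - y` along the straight-line path from `(x0, y0)` to `(xt, yt)`. -/
noncomputable def IGdev {M : ℕ} (f : (Fin M → ℝ) → ℝ) (xt x0 : Fin M → ℝ) (yt y0 : ℝ)
    (i : Fin M) : ℝ :=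
  (xt i - x0 i) * ∫ α in (0:ℝ)..1,
    fderiv ℝ (fun p : (Fin M → ℝ) × ℝ => f p.1 - p.2)
      (x0 + α • (xt - x0), y0 + α * (yt - y0)) (Pi.single i 1, 0)

lemma fderiv_dev {M : ℕ} (f : (Fin M → ℝ) → ℝ) (hf : ContDiff ℝ 1 f)
    (q : (Fin M → ℝ) × ℝ) (v : Fin M → ℝ) :
    fderiv ℝ (fun p : (Fin M → ℝ) × ℝ => f p.1 - p.2) q (v, 0) = fderiv ℝ f q.1 v := by
  have h1 : DifferentiableAt ℝ (fun p : (Fin M → ℝ) × ℝ => f p.1) q :=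
    (hf.differentiable one_ne_zero q.1).comp q differentiable_fst.differentiableAt
  have h2 : DifferentiableAt ℝ (fun p : (Fin M → ℝ) × ℝ => p.2) q :=
    differentiable_snd.differentiableAt
  rw [fderiv_fun_sub h1 h2]
  have hc : fderiv ℝ (fun p : (Fin M → ℝ) × ℝ => f p.1) q
      = (fderiv ℝ f q.1).comp (ContinuousLinearMap.fst ℝ (Fin M → ℝ) ℝ) := by
    have := fderiv_comp q (hf.differentiable one_ne_zero q.1)
      (differentiable_fst.differentiableAt (x := q))
    simpa [fderiv_fst, Function.comp_def] using this
  simp [hc, fderiv_snd]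

lemma IGdev_eq {M : ℕ} (f : (Fin M → ℝ) → ℝ) (hf : ContDiff ℝ 1 f)
    (xt x0 : Fin M → ℝ) (yt y0 : ℝ) (i : Fin M) :
    IGdev f xt x0 yt y0 i = IG f xt x0 i := by
  unfold IGdev IG partialDeriv'
  congr 1
  refine intervalIntegral.integral_congr fun α _ => ?_
  exact fderiv_dev f hf _ _

lemma IG_continuous {M : ℕ} (f : (Fin M → ℝ) → ℝ) (hf : ContDiff ℝ 1 f)
    (xt : Fin M → ℝ) (i : Fin M) : Continuous (fun x0 => IG f xt x0 i) := by
  have hcf : Continuous (fun x => fderiv ℝ f x) := hf.continuous_fderiv one_ne_zero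
  have h : Continuous (Function.uncurry fun (x0 : Fin M → ℝ) (α : ℝ) =>
      partialDeriv' f i (x0 + α • (xt - x0))) := by
    unfold partialDeriv'
    exact (hcf.comp (by fun_prop)).clm_apply continuous_const
  have h2 : Continuous fun x0 => ∫ α in (0:ℝ)..1, partialDeriv' f i (x0 + α • (xt - x0)) :=
    intervalIntegral.continuous_parametric_intervalIntegral_of_continuous' h 0 1
  exact ((continuous_const.sub (continuous_apply i)).mul h2)

/-- the expected integrated gradient of the deviation function
`F(x, y) = f(x) − y` with respect to a joint probability measure `Q` equals the expected
integrated gradient of `f` with respect to the marginal `P` of `Q` on `ℝ^M`;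
in particular it does not depend on `yt` (EIG is deviation-agnostic). -/
theorem eig_deviation_agnostic {M : ℕ} (f : (Fin M → ℝ) → ℝ) (hf : ContDiff ℝ 1 f)
    (Q : Measure ((Fin M → ℝ) × ℝ)) [IsProbabilityMeasure Q]
    (P : Measure (Fin M → ℝ)) (hP : P = Q.map Prod.fst)
    (xt : Fin M → ℝ) (yt : ℝ) (i : Fin M)
    (hint : Integrable (fun p : (Fin M → ℝ) × ℝ => IGdev f xt p.1 yt p.2 i) Q) :
    (∫ p : (Fin M → ℝ) × ℝ, IGdev f xt p.1 yt p.2 i ∂Q) = EIG f P xt i := by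
  have heq : ∀ p : (Fin M → ℝ) × ℝ, IGdev f xt p.1 yt p.2 i = IG f xt p.1 i :=
    fun p => IGdev_eq f hf xt p.1 yt p.2 i
  simp only [heq]
  rw [EIG, hP]
  rw [integral_map measurable_fst.aemeasurable
    ((IG_continuous f hf xt i).aestronglyMeasurable)]
end

section
/- Let f : ℝ^M → ℝ be a quadratic polynomial, f(x) = c + bᵀx + ½ xᵀA x with A a symmetric M×M real matrix and b ∈ ℝ^M, and let P be a probability measure on ℝ^M with finite second moments. Then for every test point x^t ∈ ℝ^M and every i ∈ {1,…,M}, the Shapley value equals the expected integrated gradient: SV_i(x^t) = EIG_i(x^t). (This is the precise form of the statement that the Shapley value is equivalent to the expected integrated gradient up to second order.) -/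
open MeasureTheory Finset

/-- Substituted input: coordinates in `T` are clamped to the test point `xt`. -/
def subst {M : ℕ} (xt x : Fin M → ℝ) (T : Finset (Fin M)) : Fin M → ℝ :=
  fun j => if j ∈ T then xt j else x j

/-- Conditional expectation `⟨f | x_T^t⟩ = ∫ f(z) dP(x)` with `z_j = x_j^t` for `j ∈ T`. -/
noncomputable def condSub {M : ℕ} (f : (Fin M → ℝ) → ℝ) (P : Measure (Fin M → ℝ))
    (xt : Fin M → ℝ) (T : Finset (Fin M)) : ℝ :=
  ∫ x, f (subst xt x T) ∂P

/-- Shapley value of feature `i` for `f` at test point `xt`. -/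
noncomputable def SV {M : ℕ} (f : (Fin M → ℝ) → ℝ) (P : Measure (Fin M → ℝ))
    (xt : Fin M → ℝ) (i : Fin M) : ℝ :=
  (1 / (M : ℝ)) * ∑ k ∈ range M, ((M - 1).choose k : ℝ)⁻¹ *
    ∑ S ∈ ((univ : Finset (Fin M)).erase i).powersetCard k,
      (condSub f P xt (insert i S) - condSub f P xt S)

/-- The quadratic polynomial `f(x) = c + bᵀx + ½ xᵀA x`. -/
noncomputable def quadf {M : ℕ} (c : ℝ) (b : Fin M → ℝ) (A : Matrix (Fin M) (Fin M) ℝ)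
    (x : Fin M → ℝ) : ℝ :=
  c + ∑ i : Fin M, b i * x i + (1 / 2) * ∑ i : Fin M, ∑ j : Fin M, x i * A i j * x j

/-! ### Auxiliary definitions -/

/-- First moment. -/
noncomputable def m1 {M : ℕ} (P : Measure (Fin M → ℝ)) (j : Fin M) : ℝ := ∫ x, x j ∂P
/-- Second moment. -/
noncomputable def m2 {M : ℕ} (P : Measure (Fin M → ℝ)) (j k : Fin M) : ℝ := ∫ x, x j * x k ∂P

/-- Canonical affine-quadratic integrand. -/
noncomputable def aq {M : ℕ} (p q r s : ℝ) (j k : Fin M) : (Fin M → ℝ) → ℝ :=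
  fun x => p + q * x j + r * x k + s * (x j * x k)

noncomputable def SVK {M : ℕ} (b : Fin M → ℝ) (A : Matrix (Fin M) (Fin M) ℝ)
    (P : Measure (Fin M → ℝ)) (xt : Fin M → ℝ) (i : Fin M) : ℝ :=
  b i * xt i + A i i * (xt i * xt i) / 2 - b i * m1 P i - A i i / 2 * m2 P i i

noncomputable def uu {M : ℕ} (A : Matrix (Fin M) (Fin M) ℝ) (P : Measure (Fin M → ℝ))
    (xt : Fin M → ℝ) (i j : Fin M) : ℝ :=
  A i j * xt j * xt i - A i j * xt j * m1 P i

noncomputable def ww {M : ℕ} (A : Matrix (Fin M) (Fin M) ℝ) (P : Measure (Fin M → ℝ))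
    (xt : Fin M → ℝ) (i j : Fin M) : ℝ :=
  A i j * xt i * m1 P j - A i j * m2 P j i

section Calculus

variable {M : ℕ} (c : ℝ) (b : Fin M → ℝ) (A : Matrix (Fin M) (Fin M) ℝ)

lemma hasFDerivAt_quadf (x : Fin M → ℝ) :
    HasFDerivAt (quadf c b A)
      ((∑ k : Fin M, b k • ContinuousLinearMap.proj k) +
        (1/2 : ℝ) • (∑ k : Fin M, ∑ j : Fin M,
          ((x k * A k j) • (ContinuousLinearMap.proj j : (Fin M → ℝ) →L[ℝ] ℝ)
            + x j • (A k j • (ContinuousLinearMap.proj k : (Fin M → ℝ) →L[ℝ] ℝ))))) x := by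
  have h1 : ∀ k : Fin M, HasFDerivAt (fun y : Fin M → ℝ => y k)
      (ContinuousLinearMap.proj k : (Fin M → ℝ) →L[ℝ] ℝ) x :=
    fun k => by exact (ContinuousLinearMap.proj (R := ℝ) (φ := fun _ : Fin M => ℝ) k).hasFDerivAt
  have hlin : HasFDerivAt (fun y : Fin M → ℝ => c + ∑ k : Fin M, b k * y k)
      (∑ k : Fin M, b k • (ContinuousLinearMap.proj k : (Fin M → ℝ) →L[ℝ] ℝ)) x :=
    (HasFDerivAt.fun_sum (fun k _ => (h1 k).const_mul (b k))).const_add c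
  have hquad : HasFDerivAt
      (fun y : Fin M → ℝ => (1/2 : ℝ) * ∑ k : Fin M, ∑ j : Fin M, y k * A k j * y j)
      ((1/2 : ℝ) • (∑ k : Fin M, ∑ j : Fin M,
          ((x k * A k j) • (ContinuousLinearMap.proj j : (Fin M → ℝ) →L[ℝ] ℝ)
            + x j • (A k j • (ContinuousLinearMap.proj k : (Fin M → ℝ) →L[ℝ] ℝ))))) x :=
    (HasFDerivAt.fun_sum (fun k _ => HasFDerivAt.fun_sum (fun j _ =>
      ((h1 k).mul_const (A k j)).mul (h1 j)))).const_mul (1/2 : ℝ)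
  exact hlin.add hquad

lemma partialDeriv_quadf (hA : A.IsSymm) (i : Fin M) (x : Fin M → ℝ) :
    partialDeriv' (quadf c b A) i x = b i + ∑ j : Fin M, A i j * x j := by
  have h := (hasFDerivAt_quadf c b A x).fderiv
  rw [partialDeriv', h]
  have hsym : ∀ k, A k i = A i k := fun k => congrFun (congrFun hA.symm k) i
  simp only [ContinuousLinearMap.add_apply, ContinuousLinearMap.sum_apply,
    ContinuousLinearMap.smul_apply, ContinuousLinearMap.proj_apply, smul_eq_mul,
    Pi.single_apply, mul_ite, mul_one, mul_zero, Finset.sum_ite_eq', Finset.mem_univ, if_true,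
    Finset.sum_add_distrib]
  have h2 : ∀ x1 : Fin M, (∑ x2 : Fin M, if x1 = i then x x2 * A x1 x2 else 0)
      = if x1 = i then ∑ x2 : Fin M, x x2 * A x1 x2 else 0 := by
    intro x1; split <;> simp
  rw [Finset.sum_congr rfl (fun x1 _ => h2 x1)]
  simp only [Finset.sum_ite_eq', Finset.mem_univ, if_true]
  have h3 : ∀ k, x k * A k i = A i k * x k := fun k => by rw [hsym k]; ring
  rw [Finset.sum_congr rfl (fun k _ => h3 k),
    Finset.sum_congr rfl (fun k (_ : k ∈ univ) => mul_comm (x k) (A i k))]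
  ring

lemma integral01 (p q : ℝ) : ∫ α in (0:ℝ)..1, (p + α * q) = p + q / 2 := by
  have h : IntervalIntegrable (fun α : ℝ => α * q) MeasureTheory.volume 0 1 := by
    apply Continuous.intervalIntegrable; continuity
  rw [intervalIntegral.integral_add intervalIntegrable_const h,
    intervalIntegral.integral_const, intervalIntegral.integral_mul_const, integral_id]
  norm_num; ring

lemma IG_quadf (hpd : ∀ i x, partialDeriv' (quadf c b A) i x = b i + ∑ j : Fin M, A i j * x j)
    (xt x0 : Fin M → ℝ) (i : Fin M) :
    IG (quadf c b A) xt x0 i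
      = (xt i - x0 i) * (b i + ∑ j : Fin M, A i j * ((x0 j + xt j) / 2)) := by
  unfold IG
  have key : ∀ α : ℝ, partialDeriv' (quadf c b A) i (x0 + α • (xt - x0))
      = (b i + ∑ j : Fin M, A i j * x0 j) + α * (∑ j : Fin M, A i j * (xt j - x0 j)) := by
    intro α
    rw [hpd i]
    have : ∀ j : Fin M, A i j * (x0 + α • (xt - x0)) j
        = A i j * x0 j + α * (A i j * (xt j - x0 j)) := by
      intro j; simp [Pi.add_apply, Pi.smul_apply, Pi.sub_apply]; ring
    rw [Finset.sum_congr rfl (fun j _ => this j), Finset.sum_add_distrib, ← Finset.mul_sum]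
    ring
  rw [intervalIntegral.integral_congr (g := fun α =>
    (b i + ∑ j : Fin M, A i j * x0 j) + α * (∑ j : Fin M, A i j * (xt j - x0 j)))
    (fun α _ => key α), integral01]
  congr 1
  have : ∀ j : Fin M, A i j * ((x0 j + xt j) / 2)
      = A i j * x0 j + (A i j * (xt j - x0 j)) / 2 := fun j => by ring
  rw [Finset.sum_congr rfl (fun j _ => this j), Finset.sum_add_distrib, ← Finset.sum_div]
  ring

lemma quadf_update (hA : A.IsSymm) (i : Fin M) (z : Fin M → ℝ) (t : ℝ) :
    quadf c b A (Function.update z i t) - quadf c b A z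
      = (t - z i) * (b i + (∑ j ∈ univ.erase i, A i j * z j) + A i i * (t + z i) / 2) := by
  have hsym : ∀ k, A k i = A i k := fun k => congrFun (congrFun hA.symm k) i
  have split : ∀ g : Fin M → ℝ, ∑ j, g j = g i + ∑ j ∈ univ.erase i, g j :=
    fun g => (Finset.add_sum_erase univ g (mem_univ i)).symm
  have hupd : ∀ j ∈ univ.erase i, Function.update z i t j = z j := by
    intro j hj
    exact Function.update_of_ne (Finset.ne_of_mem_erase hj) t z
  have hlin : ∀ u : Fin M → ℝ, (∀ j ∈ univ.erase i, u j = z j) →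
      ∑ j : Fin M, b j * u j = b i * u i + ∑ j ∈ univ.erase i, b j * z j := by
    intro u hu
    rw [split (fun j => b j * u j)]
    congr 1
    exact Finset.sum_congr rfl fun j hj => by rw [hu j hj]
  have hquad : ∀ u : Fin M → ℝ, (∀ j ∈ univ.erase i, u j = z j) →
      ∑ k : Fin M, ∑ j : Fin M, u k * A k j * u j
        = u i * A i i * u i + (∑ j ∈ univ.erase i, A i j * z j) * u i
          + (∑ j ∈ univ.erase i, A i j * z j) * u i
          + ∑ k ∈ univ.erase i, ∑ j ∈ univ.erase i, z k * A k j * z j := by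
    intro u hu
    rw [split (fun k => ∑ j, u k * A k j * u j)]
    rw [split (fun j => u i * A i j * u j)]
    have inner : ∀ k ∈ univ.erase i, ∑ j : Fin M, u k * A k j * u j
        = z k * A k i * u i + ∑ j ∈ univ.erase i, z k * A k j * z j := by
      intro k hk
      rw [split (fun j => u k * A k j * u j), hu k hk]
      congr 1
      exact Finset.sum_congr rfl fun j hj => by rw [hu j hj]
    rw [Finset.sum_congr rfl inner, Finset.sum_add_distrib]
    have e1 : ∑ j ∈ univ.erase i, u i * A i j * u j
        = (∑ j ∈ univ.erase i, A i j * z j) * u i := by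
      rw [Finset.sum_mul]
      exact Finset.sum_congr rfl fun j hj => by rw [hu j hj]; ring
    have e2 : ∑ k ∈ univ.erase i, z k * A k i * u i
        = (∑ j ∈ univ.erase i, A i j * z j) * u i := by
      rw [Finset.sum_mul]
      exact Finset.sum_congr rfl fun k hk => by rw [hsym k]; ring
    rw [e1, e2]; ring
  have h1 := hlin (Function.update z i t) hupd
  have h2 := hlin z (fun j _ => rfl)
  have h3 := hquad (Function.update z i t) hupd
  have h4 := hquad z (fun j _ => rfl)
  unfold quadf
  rw [h1, h2, h3, h4, Function.update_self]
  ring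

end Calculus

section Combinatorics

lemma card_filter_powersetCard {α : Type*} [DecidableEq α] {t : Finset α} {j : α}
    (hj : j ∈ t) (k : ℕ) :
    ((t.powersetCard (k+1)).filter (fun S => j ∈ S)).card = (t.erase j).card.choose k := by
  rw [← Finset.card_powersetCard]
  refine Finset.card_bij' (fun S _ => S.erase j) (fun S _ => insert j S) ?_ ?_ ?_ ?_
  · intro S hS
    rw [Finset.mem_filter, Finset.mem_powersetCard] at hS
    rw [Finset.mem_powersetCard]
    exact ⟨Finset.erase_subset_erase j hS.1.1,
      by rw [Finset.card_erase_of_mem hS.2, hS.1.2]; omega⟩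
  · intro S hS
    rw [Finset.mem_powersetCard] at hS
    have hjS : j ∉ S := fun h => (Finset.mem_erase.mp (hS.1 h)).1 rfl
    rw [Finset.mem_filter, Finset.mem_powersetCard]
    refine ⟨⟨?_, ?_⟩, Finset.mem_insert_self j S⟩
    · exact Finset.insert_subset hj (hS.1.trans (Finset.erase_subset j t))
    · rw [Finset.card_insert_of_notMem hjS, hS.2]
  · intro S hS
    exact Finset.insert_erase (Finset.mem_filter.mp hS).2
  · intro S hS
    rw [Finset.mem_powersetCard] at hS
    exact Finset.erase_insert (fun h => (Finset.mem_erase.mp (hS.1 h)).1 rfl)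

lemma sum_powersetCard_sum {α : Type*} [DecidableEq α] (t : Finset α) (k : ℕ) (d : α → ℝ) :
    ∑ S ∈ t.powersetCard (k+1), ∑ j ∈ S, d j
      = ∑ j ∈ t, ((t.erase j).card.choose k : ℝ) * d j := by
  have h1 : ∀ S ∈ t.powersetCard (k+1), ∑ j ∈ S, d j = ∑ j ∈ t, if j ∈ S then d j else 0 := by
    intro S hS
    rw [Finset.sum_ite_mem, Finset.inter_eq_right.mpr (Finset.mem_powersetCard.mp hS).1]
  rw [Finset.sum_congr rfl h1, Finset.sum_comm]
  refine Finset.sum_congr rfl fun j hj => ?_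
  rw [← Finset.sum_filter, Finset.sum_const, card_filter_powersetCard hj k, nsmul_eq_mul]

lemma choose_inv_sum (m : ℕ) :
    ∑ k ∈ range (m+1), (((m+1).choose (k+1) : ℝ))⁻¹ * (m.choose k : ℝ) = ((m : ℝ)+2)/2 := by
  have hterm : ∀ k ∈ range (m+1),
      (((m+1).choose (k+1) : ℝ))⁻¹ * (m.choose k : ℝ) = ((k : ℝ)+1)/((m : ℝ)+1) := by
    intro k hk
    have hk' : k ≤ m := Nat.lt_succ_iff.mp (mem_range.mp hk)
    have hpos : 0 < (m+1).choose (k+1) := Nat.choose_pos (by omega)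
    have hC : (((m+1).choose (k+1) : ℝ)) ≠ 0 := by positivity
    have hid : (m+1) * m.choose k = (m+1).choose (k+1) * (k+1) := Nat.add_one_mul_choose_eq m k
    rw [inv_mul_eq_div, div_eq_div_iff hC (by positivity)]
    have hidr := congrArg (fun n : ℕ => (n : ℝ)) hid
    push_cast at hidr ⊢
    linarith
  rw [Finset.sum_congr rfl hterm, ← Finset.sum_div]
  have hsum : ∑ k ∈ range (m+1), ((k : ℝ)+1) = ((m:ℝ)+1)*((m:ℝ)+2)/2 := by
    rw [Finset.sum_add_distrib, Finset.sum_const, card_range]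
    have h2 : (∑ i ∈ range (m+1), (i:ℝ)) = ((m:ℝ)+1)*(m:ℝ)/2 := by
      have h3 := congrArg (fun n : ℕ => (n : ℝ)) (Finset.sum_range_id_mul_two (m+1))
      push_cast at h3
      linarith
    rw [h2]
    push_cast
    ring
  rw [hsum]
  have hne : ((m:ℝ)+1) ≠ 0 := by positivity
  field_simp

end Combinatorics

section Integration

variable {M : ℕ} (c : ℝ) (b : Fin M → ℝ) (A : Matrix (Fin M) (Fin M) ℝ)
  (P : Measure (Fin M → ℝ)) [IsProbabilityMeasure P]
  (hmom1 : ∀ i : Fin M, Integrable (fun x : Fin M → ℝ => x i) P)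
  (hmom2 : ∀ i j : Fin M, Integrable (fun x : Fin M → ℝ => x i * x j) P)

include hmom1 hmom2

lemma integrable_aq (p q r s : ℝ) (j k : Fin M) : Integrable (aq p q r s j k) P := by
  unfold aq
  exact Integrable.add (Integrable.add (Integrable.add (integrable_const p)
    ((hmom1 j).const_mul q)) ((hmom1 k).const_mul r)) ((hmom2 j k).const_mul s)

lemma integral_aq (p q r s : ℝ) (j k : Fin M) :
    ∫ x, aq p q r s j k x ∂P = p + q * m1 P j + r * m1 P k + s * m2 P j k := by
  unfold aq m1 m2
  have h1 : Integrable (fun x : Fin M → ℝ => p + q * x j) P := by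
    exact (integrable_const p).add ((hmom1 j).const_mul q)
  have h2 : Integrable (fun x : Fin M → ℝ => p + q * x j + r * x k) P := by
    exact h1.add ((hmom1 k).const_mul r)
  rw [integral_add h2 ((hmom2 j k).const_mul s), integral_add h1 ((hmom1 k).const_mul r),
    integral_add (integrable_const p) ((hmom1 j).const_mul q),
    integral_const, integral_const_mul, integral_const_mul, integral_const_mul]
  simp

lemma integrable_subst (xt : Fin M → ℝ) (T : Finset (Fin M)) :
    Integrable (fun x => quadf c b A (subst xt x T)) P := by
  unfold quadf subst
  apply Integrable.add
  apply Integrable.add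
  · exact integrable_const c
  · apply integrable_finset_sum
    intro j _
    by_cases hj : j ∈ T
    · simp only [hj, if_true]; exact integrable_const _
    · simp only [hj, if_false]; exact (hmom1 j).const_mul (b j)
  · apply Integrable.const_mul
    apply integrable_finset_sum
    intro j _
    apply integrable_finset_sum
    intro k _
    by_cases hj : j ∈ T <;> by_cases hk : k ∈ T <;> simp only [hj, hk, if_true, if_false]
    · exact integrable_const _
    · exact (hmom1 k).const_mul (xt j * A j k)
    · have : (fun x : Fin M → ℝ => x j * A j k * xt k) = fun x => (A j k * xt k) * x j := by
        funext x; ring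
      rw [this]; exact (hmom1 j).const_mul _
    · have : (fun x : Fin M → ℝ => x j * A j k * x k) = fun x => A j k * (x j * x k) := by
        funext x; ring
      rw [this]; exact (hmom2 j k).const_mul _

lemma condSub_diff (hA : A.IsSymm) (xt : Fin M → ℝ) (i : Fin M) (S : Finset (Fin M))
    (hS : S ⊆ univ.erase i) :
    condSub (quadf c b A) P xt (insert i S) - condSub (quadf c b A) P xt S
      = SVK b A P xt i
        + ∑ j ∈ univ.erase i, (if j ∈ S then uu A P xt i j else ww A P xt i j) := by
  have hiS : i ∉ S := fun h => (Finset.mem_erase.mp (hS h)).1 rfl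
  unfold condSub
  rw [← integral_sub (integrable_subst c b A P hmom1 hmom2 xt (insert i S))
    (integrable_subst c b A P hmom1 hmom2 xt S)]
  have hfun : (fun x => quadf c b A (subst xt x (insert i S)) - quadf c b A (subst xt x S))
      = fun x => aq (b i * xt i + A i i * (xt i * xt i) / 2) 0 (-(b i)) (-(A i i / 2)) i i x
        + ∑ j ∈ univ.erase i,
            (if j ∈ S then aq (A i j * xt j * xt i) 0 (-(A i j * xt j)) 0 j i x
              else aq 0 (A i j * xt i) 0 (-(A i j)) j i x) := by
    funext x
    have hins : subst xt x (insert i S) = Function.update (subst xt x S) i (xt i) := by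
      funext j'
      rcases eq_or_ne j' i with h | h
      · subst h; simp [subst, Function.update]
      · simp [subst, Function.update, h, Finset.mem_insert]
    rw [hins, quadf_update c b A hA i]
    have hzi : subst xt x S i = x i := by simp [subst, hiS]
    rw [hzi]
    have expand : ∀ s q : ℝ, (xt i - x i) * (b i + s + q)
        = (xt i - x i) * (b i + q) + (xt i - x i) * s := by intros; ring
    rw [expand, Finset.mul_sum]
    congr 1
    · unfold aq; ring
    · refine Finset.sum_congr rfl fun j hj => ?_
      by_cases hjS : j ∈ S
      · simp only [subst, hjS, if_true, aq]; ring
      · simp only [subst, hjS, if_false, aq]; ring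
  rw [hfun, integral_add (integrable_aq P hmom1 hmom2 _ _ _ _ i i)
      (integrable_finset_sum _ fun j _ => by
        by_cases hjS : j ∈ S
        · simp only [hjS, if_true]; exact integrable_aq P hmom1 hmom2 _ _ _ _ j i
        · simp only [hjS, if_false]; exact integrable_aq P hmom1 hmom2 _ _ _ _ j i),
    integral_finset_sum _ (fun j _ => by
        by_cases hjS : j ∈ S
        · simp only [hjS, if_true]; exact integrable_aq P hmom1 hmom2 _ _ _ _ j i
        · simp only [hjS, if_false]; exact integrable_aq P hmom1 hmom2 _ _ _ _ j i)]
  congr 1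
  · rw [integral_aq P hmom1 hmom2]; unfold SVK; ring
  · refine Finset.sum_congr rfl fun j hj => ?_
    by_cases hjS : j ∈ S
    · simp only [hjS, if_true]
      rw [integral_aq P hmom1 hmom2]; unfold uu; ring
    · simp only [hjS, if_false]
      rw [integral_aq P hmom1 hmom2]; unfold ww; ring

end Integration

/-- for a quadratic polynomial `f(x) = c + bᵀx + ½ xᵀA x` with `A` symmetric
and a probability measure `P` with finite second moments, the Shapley value equals the
expected integrated gradient: `SV_i(x^t) = EIG_i(x^t)` for every test point and coordinate. -/
theorem sv_eq_eig_quadratic {M : ℕ} (c : ℝ) (b : Fin M → ℝ)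
    (A : Matrix (Fin M) (Fin M) ℝ) (hA : A.IsSymm)
    (P : Measure (Fin M → ℝ)) [IsProbabilityMeasure P]
    (hmom1 : ∀ i : Fin M, Integrable (fun x : Fin M → ℝ => x i) P)
    (hmom2 : ∀ i j : Fin M, Integrable (fun x : Fin M → ℝ => x i * x j) P)
    (xt : Fin M → ℝ) (i : Fin M) :
    SV (quadf c b A) P xt i = EIG (quadf c b A) P xt i := by
  classical
  have hpd := partialDeriv_quadf c b A hA
  obtain ⟨m, rfl⟩ : ∃ m, M = m + 1 := ⟨M - 1, by have := i.pos; omega⟩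
  have hcard : ((univ : Finset (Fin (m+1))).erase i).card = m := by
    rw [Finset.card_erase_of_mem (mem_univ i), Finset.card_univ, Fintype.card_fin]; omega
  -- EIG side
  have hEIG : EIG (quadf c b A) P xt i
      = SVK b A P xt i + ∑ j ∈ univ.erase i, ((uu A P xt i j + ww A P xt i j) / 2) := by
    unfold EIG
    have hfun : (fun x0 => IG (quadf c b A) xt x0 i)
        = fun x => aq (xt i * b i) 0 (-(b i)) 0 i i x
          + ∑ j : Fin (m+1), aq (A i j * xt i * xt j / 2) (A i j * xt i / 2)
              (-(A i j * xt j / 2)) (-(A i j / 2)) j i x := by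
      funext x
      rw [IG_quadf c b A hpd]
      have expand : ∀ s : ℝ, (xt i - x i) * (b i + s)
          = (xt i - x i) * b i + (xt i - x i) * s := fun s => by ring
      rw [expand, Finset.mul_sum]
      congr 1
      · unfold aq; ring
      · exact Finset.sum_congr rfl fun j _ => by unfold aq; ring
    rw [hfun, integral_add (integrable_aq P hmom1 hmom2 _ _ _ _ i i)
        (integrable_finset_sum _ fun j _ => integrable_aq P hmom1 hmom2 _ _ _ _ j i),
      integral_finset_sum _ (fun j _ => integrable_aq P hmom1 hmom2 _ _ _ _ j i)]
    rw [integral_aq P hmom1 hmom2,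
      Finset.sum_congr rfl (fun j (_ : j ∈ univ) => integral_aq P hmom1 hmom2
        (A i j * xt i * xt j / 2) (A i j * xt i / 2) (-(A i j * xt j / 2)) (-(A i j / 2)) j i)]
    rw [← Finset.add_sum_erase univ _ (mem_univ i)]
    have he : ∀ j ∈ univ.erase i,
        A i j * xt i * xt j / 2 + A i j * xt i / 2 * m1 P j + -(A i j * xt j / 2) * m1 P i
            + -(A i j / 2) * m2 P j i
          = (uu A P xt i j + ww A P xt i j) / 2 := by
      intro j _; unfold uu ww; ring
    rw [Finset.sum_congr rfl he]
    unfold SVK; ring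
  -- SV side
  have hcond : ∀ S : Finset (Fin (m+1)), S ⊆ univ.erase i →
      condSub (quadf c b A) P xt (insert i S) - condSub (quadf c b A) P xt S
        = (SVK b A P xt i + ∑ j ∈ univ.erase i, ww A P xt i j)
          + ∑ j ∈ S, (uu A P xt i j - ww A P xt i j) := by
    intro S hSE
    rw [condSub_diff c b A P hmom1 hmom2 hA xt i S hSE]
    have hsplit : ∀ j ∈ univ.erase i, (if j ∈ S then uu A P xt i j else ww A P xt i j)
        = ww A P xt i j + (if j ∈ S then uu A P xt i j - ww A P xt i j else 0) := by
      intro j _; by_cases h : j ∈ S <;> simp [h]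
    rw [Finset.sum_congr rfl hsplit, Finset.sum_add_distrib, Finset.sum_ite_mem,
      Finset.inter_eq_right.mpr hSE]
    ring
  have hG0 : ∑ S ∈ ((univ : Finset (Fin (m+1))).erase i).powersetCard 0,
      ∑ j ∈ S, (uu A P xt i j - ww A P xt i j) = 0 := by
    simp [Finset.powersetCard_zero]
  have hGk : ∀ k : ℕ, ∑ S ∈ ((univ : Finset (Fin (m+1))).erase i).powersetCard (k+1),
      ∑ j ∈ S, (uu A P xt i j - ww A P xt i j)
        = ((m-1).choose k : ℝ) * ∑ j ∈ univ.erase i, (uu A P xt i j - ww A P xt i j) := by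
    intro k
    rw [sum_powersetCard_sum]
    have hc : ∀ j ∈ (univ : Finset (Fin (m+1))).erase i,
        ((((univ : Finset (Fin (m+1))).erase i).erase j).card.choose k : ℝ)
          * (uu A P xt i j - ww A P xt i j)
        = ((m-1).choose k : ℝ) * (uu A P xt i j - ww A P xt i j) := by
      intro j hj
      rw [Finset.card_erase_of_mem hj, hcard]
    rw [Finset.sum_congr rfl hc, ← Finset.mul_sum]
  set K' : ℝ := SVK b A P xt i + ∑ j ∈ univ.erase i, ww A P xt i j with hK'
  set D : ℝ := ∑ j ∈ univ.erase i, (uu A P xt i j - ww A P xt i j) with hD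
  have hdiff : ∀ k ∈ range (m+1),
      ((m+1-1).choose k : ℝ)⁻¹ * ∑ S ∈ ((univ : Finset (Fin (m+1))).erase i).powersetCard k,
        (condSub (quadf c b A) P xt (insert i S) - condSub (quadf c b A) P xt S)
      = K' + (m.choose k : ℝ)⁻¹
          * ∑ S ∈ ((univ : Finset (Fin (m+1))).erase i).powersetCard k,
              ∑ j ∈ S, (uu A P xt i j - ww A P xt i j) := by
    intro k hk
    have hC : 0 < m.choose k := Nat.choose_pos (by have := mem_range.mp hk; omega)
    have hCne : ((m.choose k : ℝ)) ≠ 0 := by positivity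
    have h1 : ∀ S ∈ ((univ : Finset (Fin (m+1))).erase i).powersetCard k,
        condSub (quadf c b A) P xt (insert i S) - condSub (quadf c b A) P xt S
          = K' + ∑ j ∈ S, (uu A P xt i j - ww A P xt i j) :=
      fun S hS => hcond S (Finset.mem_powersetCard.mp hS).1
    rw [Finset.sum_congr rfl h1, Finset.sum_add_distrib, Finset.sum_const,
      Finset.card_powersetCard, hcard]
    have hm1 : m + 1 - 1 = m := by omega
    rw [hm1, nsmul_eq_mul, mul_add, ← mul_assoc, inv_mul_cancel₀ hCne, one_mul]
  unfold SV
  rw [Finset.sum_congr rfl hdiff, Finset.sum_add_distrib, Finset.sum_const, card_range,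
    nsmul_eq_mul]
  have hsum3 : ∑ k ∈ range (m+1),
      (m.choose k : ℝ)⁻¹ * ∑ S ∈ ((univ : Finset (Fin (m+1))).erase i).powersetCard k,
        ∑ j ∈ S, (uu A P xt i j - ww A P xt i j) = ((m:ℝ)+1)/2 * D := by
    rcases Nat.eq_zero_or_pos m with hm | hm
    · subst hm
      have hE : ((univ : Finset (Fin 1)).erase i) = ∅ := by
        exact Finset.card_eq_zero.mp hcard
      have hD0 : D = 0 := by rw [hD, hE]; simp
      simp [hG0, hD0]
    · obtain ⟨m', rfl⟩ : ∃ m', m = m' + 1 := ⟨m - 1, by omega⟩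
      rw [Finset.sum_range_succ']
      have h0 : ((m'+1).choose 0 : ℝ)⁻¹ * ∑ S ∈ ((univ : Finset (Fin (m'+1+1))).erase i).powersetCard 0,
          ∑ j ∈ S, (uu A P xt i j - ww A P xt i j) = 0 := by
        rw [hG0]; ring
      rw [h0, add_zero]
      have hterm : ∀ k ∈ range (m'+1),
          ((m'+1).choose (k+1) : ℝ)⁻¹
            * ∑ S ∈ ((univ : Finset (Fin (m'+1+1))).erase i).powersetCard (k+1),
                ∑ j ∈ S, (uu A P xt i j - ww A P xt i j)
          = ((m'+1).choose (k+1) : ℝ)⁻¹ * (m'.choose k : ℝ) * D := by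
        intro k _
        rw [hGk k]
        have h5 : m' + 1 - 1 = m' := by omega
        rw [h5, mul_assoc]
      rw [Finset.sum_congr rfl hterm, ← Finset.sum_mul, choose_inv_sum]
      push_cast
      ring
  rw [hsum3]
  rw [hEIG]
  have hfinal : ∑ j ∈ (univ : Finset (Fin (m+1))).erase i, ((uu A P xt i j + ww A P xt i j) / 2)
      = ∑ j ∈ univ.erase i, ww A P xt i j + D / 2 := by
    have h1 : ∑ j ∈ (univ : Finset (Fin (m+1))).erase i, ((uu A P xt i j + ww A P xt i j) / 2)
        = (∑ j ∈ univ.erase i, (uu A P xt i j + ww A P xt i j)) / 2 :=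
      (Finset.sum_div _ _ _).symm
    rw [h1, Finset.sum_add_distrib, hD, Finset.sum_sub_distrib]
    ring
  rw [hfinal, hK']
  have hne : ((m:ℝ)+1) ≠ 0 := by positivity
  push_cast
  field_simp
  ring
end

section
/- Let f : ℝ^M → ℝ be twice continuously differentiable and fix a test point x^t ∈ ℝ^M and an index i. Regarding IG_i(x^t | x⁰) as a function of the test point x^t, its partial derivative with respect to x_i^t converges to the i-th partial derivative of f at x^t as the baseline approaches the test point: lim_{x⁰ → x^t} ∂IG_i(x^t | x⁰)/∂x_i^t = ∂f(x^t)/∂x_i. (This identifies the local limit of the derivative of IG with the local-linear (LIME) attribution, which estimates the local gradient of f at x^t.) -/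
open MeasureTheory Finset Filter

/-- regarding `IG_i(x^t | x⁰)` as a function of the test point `x^t`, its
partial derivative with respect to `x_i^t` converges to `∂f(x^t)/∂x_i` as the baseline
`x⁰` approaches the test point; this local limit is the LIME (local-gradient) attribution. -/
theorem deriv_ig_tendsto_gradient {M : ℕ} (f : (Fin M → ℝ) → ℝ) (hf : ContDiff ℝ 2 f)
    (xt : Fin M → ℝ) (i : Fin M) :
    Tendsto (fun x0 : Fin M → ℝ => fderiv ℝ (fun x : Fin M → ℝ => IG f x x0 i) xt (Pi.single i 1))
      (nhds xt) (nhds (fderiv ℝ f xt (Pi.single i 1))) := by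
  set e : Fin M → ℝ := Pi.single i 1 with he
  set g : (Fin M → ℝ) → ℝ := fun x => fderiv ℝ f x e with hgdef
  have hg1 : ContDiff ℝ 1 g := by
    have h1 : ContDiff ℝ 1 (fderiv ℝ f) := hf.fderiv_right (by norm_num)
    exact ((ContinuousLinearMap.apply ℝ ℝ e).contDiff).comp h1
  have hgc : Continuous g := hg1.continuous
  have hgd : Differentiable ℝ g := hg1.differentiable one_ne_zero
  have hGc : Continuous (fderiv ℝ g) := hg1.continuous_fderiv one_ne_zero
  obtain ⟨C, hC⟩ := (isCompact_closedBall xt 2).exists_bound_of_continuousOn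
      (hGc.continuousOn (s := Metric.closedBall xt 2))
  have hC0 : 0 ≤ C := le_trans (norm_nonneg _) (hC xt (by simp))
  -- membership of the integration points in the closed ball of radius 2
  have hpt : ∀ (x0 x : Fin M → ℝ), x0 ∈ Metric.ball xt 1 → x ∈ Metric.ball xt 2 →
      ∀ α ∈ Set.Ioc (0:ℝ) 1, x0 + α • (x - x0) ∈ Metric.closedBall xt 2 := by
    intro x0 x hx0 hx α hα
    have hx0' : ‖x0 - xt‖ < 1 := by rw [← dist_eq_norm]; exact hx0
    have hx' : ‖x - xt‖ < 2 := by rw [← dist_eq_norm]; exact hx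
    have hrw : x0 + α • (x - x0) - xt = (1 - α) • (x0 - xt) + α • (x - xt) := by module
    rw [Metric.mem_closedBall, dist_eq_norm, hrw]
    calc ‖(1 - α) • (x0 - xt) + α • (x - xt)‖
        ≤ ‖(1 - α) • (x0 - xt)‖ + ‖α • (x - xt)‖ := norm_add_le _ _
      _ = |1 - α| * ‖x0 - xt‖ + |α| * ‖x - xt‖ := by
          rw [norm_smul, norm_smul, Real.norm_eq_abs, Real.norm_eq_abs]
      _ ≤ 2 := by
          rw [abs_of_nonneg (by linarith [hα.2]), abs_of_nonneg (le_of_lt hα.1)]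
          nlinarith [hα.1, hα.2, norm_nonneg (x0 - xt), norm_nonneg (x - xt)]
  -- bound on the derivative integrand
  have hbound : ∀ (x0 x : Fin M → ℝ), x0 ∈ Metric.ball xt 1 → x ∈ Metric.ball xt 2 →
      ∀ α ∈ Set.Ioc (0:ℝ) 1, ‖α • fderiv ℝ g (x0 + α • (x - x0))‖ ≤ C := by
    intro x0 x hx0 hx α hα
    rw [norm_smul, Real.norm_eq_abs, abs_of_nonneg (le_of_lt hα.1)]
    calc α * ‖fderiv ℝ g (x0 + α • (x - x0))‖
        ≤ 1 * C := by
          apply mul_le_mul hα.2 (hC _ (hpt x0 x hx0 hx α hα)) (norm_nonneg _) zero_le_one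
      _ = C := one_mul C
  -- differentiability of the parametric integral, with product rule
  have key : ∀ x0 ∈ Metric.ball xt 1,
      HasFDerivAt (fun x => (x i - x0 i) * ∫ α in (0:ℝ)..1, g (x0 + α • (x - x0)))
        ((xt i - x0 i) • (∫ α in (0:ℝ)..1, α • fderiv ℝ g (x0 + α • (xt - x0)))
          + (∫ α in (0:ℝ)..1, g (x0 + α • (xt - x0))) •
            (ContinuousLinearMap.proj (R := ℝ) (φ := fun _ : Fin M => ℝ) i)) xt := by
    intro x0 hx0
    have hInt : HasFDerivAt (fun x => ∫ α in (0:ℝ)..1, g (x0 + α • (x - x0)))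
        (∫ α in (0:ℝ)..1, α • fderiv ℝ g (x0 + α • (xt - x0))) xt := by
      apply intervalIntegral.hasFDerivAt_integral_of_dominated_of_fderiv_le
        (F' := fun x α => α • fderiv ℝ g (x0 + α • (x - x0))) (bound := fun _ => C) (Metric.ball_mem_nhds xt one_pos)
      · filter_upwards with x
        exact (hgc.comp (by fun_prop)).aestronglyMeasurable
      · exact (hgc.comp (by fun_prop)).intervalIntegrable 0 1
      · exact ((continuous_id.smul (hGc.comp (by fun_prop)))).aestronglyMeasurable
      · filter_upwards with α hα x hx
        rw [Set.uIoc_of_le zero_le_one] at hα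
        exact hbound x0 x hx0 (Metric.ball_subset_ball one_le_two hx) α hα
      · exact intervalIntegrable_const
      · filter_upwards with α hα x hx
        have h1 : HasFDerivAt (fun y : Fin M → ℝ => x0 + α • (y - x0))
            (α • ContinuousLinearMap.id ℝ (Fin M → ℝ)) x := by
          simpa using (((hasFDerivAt_id (𝕜 := ℝ) x).sub_const x0).const_smul α).const_add x0
        have h2 := (hgd (x0 + α • (x - x0))).hasFDerivAt
        have h3 := h2.comp x h1
        convert h3 using 1
        ext v
        simp [ContinuousLinearMap.comp_apply]
        ext v
        simp [ContinuousLinearMap.comp_apply]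
    have hc : HasFDerivAt (fun x : Fin M → ℝ => x i - x0 i)
        (ContinuousLinearMap.proj (R := ℝ) (φ := fun _ : Fin M => ℝ) i) xt :=
      (ContinuousLinearMap.proj (R := ℝ) (φ := fun _ : Fin M => ℝ) i).hasFDerivAt.sub_const _
    exact hc.mul hInt
  -- formula for the fderiv of IG in the test point
  have heq : ∀ x0 ∈ Metric.ball xt 1,
      fderiv ℝ (fun x => IG f x x0 i) xt e
        = (xt i - x0 i) * ((∫ α in (0:ℝ)..1, α • fderiv ℝ g (x0 + α • (xt - x0))) e)
          + (∫ α in (0:ℝ)..1, g (x0 + α • (xt - x0))) := by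
    intro x0 hx0
    have hfun : (fun x => IG f x x0 i)
        = fun x => (x i - x0 i) * ∫ α in (0:ℝ)..1, g (x0 + α • (x - x0)) := by
      funext x; simp only [IG, partialDeriv', hgdef, he]
    rw [hfun, (key x0 hx0).fderiv]
    simp [he, ContinuousLinearMap.proj_apply, Pi.single_eq_same]
  -- first summand tends to 0
  have hnorme : ‖e‖ = 1 := by rw [he, Pi.norm_single, norm_one]
  have h1 : Tendsto (fun x0 : Fin M → ℝ => (xt i - x0 i) *
      ((∫ α in (0:ℝ)..1, α • fderiv ℝ g (x0 + α • (xt - x0))) e)) (nhds xt) (nhds 0) := by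
    apply squeeze_zero_norm' (a := fun x0 : Fin M → ℝ => ‖x0 - xt‖ * C)
    · filter_upwards [Metric.ball_mem_nhds xt one_pos] with x0 hx0
      have hK : ‖∫ α in (0:ℝ)..1, α • fderiv ℝ g (x0 + α • (xt - x0))‖ ≤ C := by
        have := intervalIntegral.norm_integral_le_of_norm_le_const
          (C := C) (a := (0:ℝ)) (b := 1)
          (f := fun α => α • fderiv ℝ g (x0 + α • (xt - x0))) ?_
        · simpa using this
        · intro α hα
          rw [Set.uIoc_of_le zero_le_one] at hα
          exact hbound x0 xt hx0 (Metric.mem_ball_self two_pos) α hα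
      have hxi : |xt i - x0 i| ≤ ‖x0 - xt‖ := by
        rw [norm_sub_rev]
        have := norm_le_pi_norm (xt - x0) i
        simpa [Real.norm_eq_abs] using this
      calc ‖(xt i - x0 i) * ((∫ α in (0:ℝ)..1, α • fderiv ℝ g (x0 + α • (xt - x0))) e)‖
          = |xt i - x0 i| * ‖(∫ α in (0:ℝ)..1, α • fderiv ℝ g (x0 + α • (xt - x0))) e‖ := by
            rw [norm_mul, Real.norm_eq_abs]
        _ ≤ ‖x0 - xt‖ * C := by
            apply mul_le_mul hxi ?_ (norm_nonneg _) (norm_nonneg _)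
            calc ‖(∫ α in (0:ℝ)..1, α • fderiv ℝ g (x0 + α • (xt - x0))) e‖
                ≤ ‖∫ α in (0:ℝ)..1, α • fderiv ℝ g (x0 + α • (xt - x0))‖ * ‖e‖ :=
                  ContinuousLinearMap.le_opNorm _ _
              _ ≤ C := by rw [hnorme, mul_one]; exact hK
    · have : Tendsto (fun x0 : Fin M → ℝ => ‖x0 - xt‖ * C) (nhds xt) (nhds (‖xt - xt‖ * C)) :=
        (((continuous_id.sub continuous_const).norm).mul continuous_const).tendsto xt
      simpa using this
  -- second summand tends to g xt
  have h2 : Tendsto (fun x0 : Fin M → ℝ => ∫ α in (0:ℝ)..1, g (x0 + α • (xt - x0)))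
      (nhds xt) (nhds (g xt)) := by
    rw [Metric.tendsto_nhds_nhds]
    intro ε hε
    obtain ⟨δ, hδ, hδ'⟩ := Metric.continuousAt_iff.mp hgc.continuousAt (ε/2) (half_pos hε)
    refine ⟨δ, hδ, fun {x0} hx0 => ?_⟩
    have hcont : Continuous fun α : ℝ => g (x0 + α • (xt - x0)) := hgc.comp (by fun_prop)
    have hint : (∫ α in (0:ℝ)..1, g (x0 + α • (xt - x0))) - g xt
        = ∫ α in (0:ℝ)..1, (g (x0 + α • (xt - x0)) - g xt) := by
      rw [intervalIntegral.integral_sub (hcont.intervalIntegrable 0 1)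
        (intervalIntegrable_const)]
      simp
    rw [dist_eq_norm, hint]
    have hptb : ∀ α ∈ Set.uIoc (0:ℝ) 1, ‖g (x0 + α • (xt - x0)) - g xt‖ ≤ ε/2 := by
      intro α hα
      rw [Set.uIoc_of_le zero_le_one] at hα
      have hd : dist (x0 + α • (xt - x0)) xt < δ := by
        rw [dist_eq_norm]
        have hrw : x0 + α • (xt - x0) - xt = (1 - α) • (x0 - xt) := by module
        rw [hrw, norm_smul, Real.norm_eq_abs, abs_of_nonneg (by linarith [hα.2])]
        have hx0' : ‖x0 - xt‖ < δ := by rw [← dist_eq_norm]; exact hx0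
        nlinarith [hα.1, hα.2, norm_nonneg (x0 - xt)]
      have := hδ' hd
      rw [dist_eq_norm] at this
      exact le_of_lt this
    calc ‖∫ α in (0:ℝ)..1, (g (x0 + α • (xt - x0)) - g xt)‖
        ≤ ε/2 * |1 - 0| := intervalIntegral.norm_integral_le_of_norm_le_const hptb
      _ < ε := by rw [show |(1:ℝ) - 0| = 1 by norm_num, mul_one]; linarith
  -- combine
  have hsum : Tendsto (fun x0 : Fin M → ℝ =>
      (xt i - x0 i) * ((∫ α in (0:ℝ)..1, α • fderiv ℝ g (x0 + α • (xt - x0))) e)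
        + (∫ α in (0:ℝ)..1, g (x0 + α • (xt - x0)))) (nhds xt) (nhds (g xt)) := by
    simpa using h1.add h2
  refine Tendsto.congr' ?_ hsum
  filter_upwards [Metric.ball_mem_nhds xt one_pos] with x0 hx0
  exact (heq x0 hx0).symm
end

section
/- Let f : ℝ^M → ℝ be continuously differentiable with bounded gradient, i.e., there exists L ≥ 0 with |∂f(x)/∂x_j| ≤ L for all x and j. For η > 0, let P_η be the Gaussian measure N(x^t, η·I_M) centered at the test point x^t with covariance η times the identity. Then the expected integrated gradient with respect to P_η vanishes in the local limit: for every i, lim_{η → 0⁺} EIG_i(x^t) = 0, where EIG_i(x^t) = ∫ IG_i(x^t | x⁰) dP_η(x⁰). -/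
open MeasureTheory Finset Filter ProbabilityTheory

open Real Set in
private lemma integrable_abs_mul_pdf {m η : ℝ} (hη : 0 < η) :
    Integrable (fun x : ℝ => |x - m| * gaussianPDFReal m η.toNNReal x) := by
  have hb : (0:ℝ) < (2*η)⁻¹ := by positivity
  have key : Integrable (fun y : ℝ => |y| * gaussianPDFReal m η.toNNReal (y + m)) := by
    have h0 : Integrable (fun y : ℝ => (√(2 * π * η.toNNReal))⁻¹ * (|y| * rexp (-(2*η)⁻¹ * y^2))) :=
      ((integrable_mul_exp_neg_mul_sq hb).abs.congr (by
        filter_upwards with y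
        rw [abs_mul, abs_of_nonneg (exp_pos _).le])).const_mul _
    refine h0.congr (Eventually.of_forall fun y => ?_)
    rw [gaussianPDFReal_def]
    have hc : (η.toNNReal : ℝ) = η := Real.coe_toNNReal η hη.le
    simp only [hc, add_sub_cancel_right]
    ring_nf
  have := key.comp_sub_right m
  refine this.congr (Eventually.of_forall fun x => ?_)
  simp

open Real Set in
private lemma integrable_abs_gauss {m η : ℝ} (hη : 0 < η) :
    Integrable (fun x : ℝ => |x - m|) (gaussianReal m η.toNNReal) := by
  have hv : η.toNNReal ≠ 0 := by
    simp [Real.toNNReal_eq_zero, not_le, hη]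
  rw [gaussianReal_of_var_ne_zero m hv,
    integrable_withDensity_iff (measurable_gaussianPDF _ _)
      (Eventually.of_forall fun x => ENNReal.ofReal_lt_top)]
  refine ((integrable_abs_mul_pdf (m := m) hη).congr (Eventually.of_forall fun x => ?_))
  simp only [gaussianPDF]
  rw [ENNReal.toReal_ofReal (gaussianPDFReal_nonneg _ _ _)]

open Real Set in
private lemma integral_abs_gauss {m η : ℝ} (hη : 0 < η) :
    ∫ x, |x - m| ∂(gaussianReal m η.toNNReal) = 2 * η / √(2 * π * η) := by
  have hv : η.toNNReal ≠ 0 := by simp [Real.toNNReal_eq_zero, not_le, hη]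
  have hc : (η.toNNReal : ℝ) = η := Real.coe_toNNReal η hη.le
  have hb : (0:ℝ) < (2*η)⁻¹ := by positivity
  rw [gaussianReal_of_var_ne_zero m hv]
  have hdens : ((volume : Measure ℝ).withDensity (gaussianPDF m η.toNNReal))
      = (volume : Measure ℝ).withDensity
          (fun x => ((gaussianPDFReal m η.toNNReal x).toNNReal : ENNReal)) := rfl
  rw [hdens, integral_withDensity_eq_integral_smul
    ((measurable_gaussianPDFReal _ _).real_toNNReal)]
  have step1 : (fun x : ℝ => (gaussianPDFReal m η.toNNReal x).toNNReal • |x - m|)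
      = fun x => (fun y => (√(2 * π * η))⁻¹ * (|y| * rexp (-(2*η)⁻¹ * y^2))) (x - m) := by
    funext x
    rw [NNReal.smul_def, Real.coe_toNNReal _ (gaussianPDFReal_nonneg _ _ _),
      gaussianPDFReal_def]
    simp only [hc, smul_eq_mul]
    ring_nf
  rw [step1, integral_sub_right_eq_self
    (fun y => (√(2 * π * η))⁻¹ * (|y| * rexp (-(2*η)⁻¹ * y^2))) m, integral_const_mul]
  have step2 : (fun y : ℝ => |y| * rexp (-(2*η)⁻¹ * y^2))
      = fun y => (fun t => t * rexp (-(2*η)⁻¹ * t^2)) |y| := by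
    funext y
    simp [sq_abs]
  rw [step2, integral_comp_abs (f := fun t => t * rexp (-(2*η)⁻¹ * t^2))]
  have step3 : ∫ t in Set.Ioi (0:ℝ), t * rexp (-(2*η)⁻¹ * t^2)
      = ∫ t in Set.Ioi (0:ℝ), t ^ (1:ℝ) * rexp (-(2*η)⁻¹ * t ^ (2:ℝ)) := by
    refine setIntegral_congr_fun measurableSet_Ioi fun t ht => ?_
    rw [rpow_one]
    norm_cast
  rw [step3, integral_rpow_mul_exp_neg_mul_rpow two_pos (by norm_num) hb]
  rw [show (-(1+1)/2 : ℝ) = -1 by norm_num, show ((1+1)/2 : ℝ) = 1 by norm_num,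
    rpow_neg_one, inv_inv, Real.Gamma_one]
  have hs : √(2 * π * η) ≠ 0 := by positivity
  field_simp

private lemma map_eval_pi' {M : ℕ} (μ : Fin M → Measure ℝ) [∀ j, IsProbabilityMeasure (μ j)]
    (i : Fin M) : (Measure.pi μ).map (Function.eval i) = μ i := by
  ext s hs
  rw [Measure.map_apply (measurable_pi_apply i) hs, Set.eval_preimage, Measure.pi_pi,
    Fintype.prod_eq_single i (fun j hj => by rw [Function.update_of_ne hj]; exact measure_univ),
    Function.update_self]

/-- The Gaussian measure `N(x^t, η I_M)` on `ℝ^M`: the product of one-dimensional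
Gaussians with mean `x^t_j` and variance `η`. -/
noncomputable def gaussPi {M : ℕ} (xt : Fin M → ℝ) (η : ℝ) : Measure (Fin M → ℝ) :=
  Measure.pi fun j => gaussianReal (xt j) η.toNNReal

/-- for `f` continuously differentiable with gradient bounded by `L`, the
expected integrated gradient with respect to the Gaussian `N(x^t, η I_M)` centered at the
test point vanishes in the local limit `η → 0⁺`. -/
theorem eig_vanishes_in_local_limit {M : ℕ} (f : (Fin M → ℝ) → ℝ) (hf : ContDiff ℝ 1 f)
    (L : ℝ) (hL : 0 ≤ L)
    (hgrad : ∀ (x : Fin M → ℝ) (j : Fin M), |fderiv ℝ f x (Pi.single j 1)| ≤ L)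
    (xt : Fin M → ℝ) (i : Fin M) :
    Tendsto (fun η : ℝ => ∫ x0, IG f xt x0 i ∂(gaussPi xt η))
      (nhdsWithin 0 (Set.Ioi 0)) (nhds 0) := by
  classical
  -- continuity of the partial derivative
  have hpd : Continuous (partialDeriv' f i) :=
    (hf.continuous_fderiv one_ne_zero).clm_apply continuous_const
  -- measurability of the integrated gradient
  have hGm : StronglyMeasurable
      (fun x0 : Fin M → ℝ => ∫ α in (0:ℝ)..1, partialDeriv' f i (x0 + α • (xt - x0))) := by
    have hF : Continuous (fun p : (Fin M → ℝ) × ℝ => partialDeriv' f i (p.1 + p.2 • (xt - p.1))) :=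
      hpd.comp (continuous_fst.add (continuous_snd.smul (continuous_const.sub continuous_fst)))
    have h1 : StronglyMeasurable (fun x0 : Fin M → ℝ =>
        ∫ α in Set.Ioc (0:ℝ) 1, partialDeriv' f i (x0 + α • (xt - x0)) ∂volume) :=
      hF.stronglyMeasurable.integral_prod_right'
    have heq : (fun x0 : Fin M → ℝ => ∫ α in (0:ℝ)..1, partialDeriv' f i (x0 + α • (xt - x0)))
        = fun x0 => ∫ α in Set.Ioc (0:ℝ) 1, partialDeriv' f i (x0 + α • (xt - x0)) ∂volume :=
      funext fun x0 => intervalIntegral.integral_of_le zero_le_one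
    rw [heq]; exact h1
  have hIGm : StronglyMeasurable (fun x0 => IG f xt x0 i) :=
    ((continuous_const.sub (continuous_apply i)).stronglyMeasurable).mul hGm
  -- pointwise bound on the integrated gradient
  have hIGbound : ∀ x0 : Fin M → ℝ, ‖IG f xt x0 i‖ ≤ L * |x0 i - xt i| := by
    intro x0
    have hGle : |∫ α in (0:ℝ)..1, partialDeriv' f i (x0 + α • (xt - x0))| ≤ L := by
      have h := intervalIntegral.norm_integral_le_of_norm_le_const
        (a := (0:ℝ)) (b := 1) (C := L)
        (f := fun α => partialDeriv' f i (x0 + α • (xt - x0)))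
        (fun α _ => by
          simpa [partialDeriv', Real.norm_eq_abs] using hgrad (x0 + α • (xt - x0)) i)
      simpa using h
    rw [IG, Real.norm_eq_abs, abs_mul, abs_sub_comm (xt i), mul_comm L]
    exact mul_le_mul_of_nonneg_left hGle (abs_nonneg _)
  -- marginal of the product Gaussian
  have hmap : ∀ η : ℝ, (gaussPi xt η).map (Function.eval i) = gaussianReal (xt i) η.toNNReal :=
    fun η => map_eval_pi' _ i
  have hev : Measurable (Function.eval i : (Fin M → ℝ) → ℝ) := measurable_pi_apply i
  have habs_cont : Continuous fun y : ℝ => |y - xt i| :=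
    (continuous_id.sub continuous_const).abs
  -- bound on the integral for positive η
  have key : ∀ η : ℝ, 0 < η →
      ‖∫ x0, IG f xt x0 i ∂(gaussPi xt η)‖ ≤ L * (2 * η / Real.sqrt (2 * Real.pi * η)) := by
    intro η hη
    have habs_m : AEStronglyMeasurable (fun y : ℝ => |y - xt i|) ((gaussPi xt η).map (Function.eval i)) := by
      rw [hmap]; exact habs_cont.aestronglyMeasurable
    have hb_int : Integrable (fun x0 : Fin M → ℝ => |x0 i - xt i|) (gaussPi xt η) := by
      have h1 : Integrable (fun y : ℝ => |y - xt i|) ((gaussPi xt η).map (Function.eval i)) := by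
        rw [hmap]; exact integrable_abs_gauss hη
      exact (integrable_map_measure habs_m hev.aemeasurable).mp h1
    have hint_eq : ∫ x0, |x0 i - xt i| ∂(gaussPi xt η)
        = 2 * η / Real.sqrt (2 * Real.pi * η) := by
      have h2 := integral_map hev.aemeasurable habs_m
        (f := fun y : ℝ => |y - xt i|)
      rw [hmap] at h2
      rw [← h2, integral_abs_gauss hη]
    have hIG_int : Integrable (fun x0 => IG f xt x0 i) (gaussPi xt η) :=
      (hb_int.const_mul L).mono' hIGm.aestronglyMeasurable
        (Eventually.of_forall hIGbound)
    calc ‖∫ x0, IG f xt x0 i ∂(gaussPi xt η)‖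
        ≤ ∫ x0, ‖IG f xt x0 i‖ ∂(gaussPi xt η) := norm_integral_le_integral_norm _
      _ ≤ ∫ x0, L * |x0 i - xt i| ∂(gaussPi xt η) :=
          integral_mono hIG_int.norm (hb_int.const_mul L) hIGbound
      _ = L * (2 * η / Real.sqrt (2 * Real.pi * η)) := by
          rw [integral_const_mul, hint_eq]
  -- the bound tends to zero
  have hid : ∀ η : ℝ, 0 < η →
      Real.sqrt (2 * η / Real.pi) = 2 * η / Real.sqrt (2 * Real.pi * η) := by
    intro η hη
    have h2 : (0:ℝ) < Real.sqrt (2 * Real.pi * η) := by positivity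
    rw [eq_div_iff h2.ne', ← Real.sqrt_mul (by positivity) (2 * Real.pi * η),
      show (2*η/Real.pi) * (2*Real.pi*η) = (2*η)^2 by field_simp]
    exact Real.sqrt_sq (by positivity)
  have hlim : Tendsto (fun η : ℝ => L * (2 * η / Real.sqrt (2 * Real.pi * η)))
      (nhdsWithin 0 (Set.Ioi 0)) (nhds 0) := by
    have hcont : Continuous fun η : ℝ => L * Real.sqrt (2 * η / Real.pi) :=
      continuous_const.mul (Real.continuous_sqrt.comp
        ((continuous_const.mul continuous_id).div_const Real.pi))
    have h1 : Tendsto (fun η : ℝ => L * Real.sqrt (2 * η / Real.pi)) (nhds 0) (nhds 0) := by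
      have := hcont.tendsto 0
      simpa using this
    refine (h1.mono_left nhdsWithin_le_nhds).congr' ?_
    filter_upwards [self_mem_nhdsWithin] with η hη
    rw [hid η hη]
  exact squeeze_zero_norm'
    (by filter_upwards [self_mem_nhdsWithin] with η hη using key η hη) hlim
end

section
/- Let f : ℝ^M → ℝ be continuously differentiable. For any test point x^t and baseline point x⁰ in ℝ^M, the integrated gradients satisfy the completeness (sum) rule: Σ_{i=1}^M IG_i(x^t | x⁰) = f(x^t) − f(x⁰). -/
open MeasureTheory Finset

/-- completeness (sum) rule for integrated gradients:
`Σ_i IG_i(x^t | x⁰) = f(x^t) − f(x⁰)`. -/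
theorem ig_completeness {M : ℕ} (f : (Fin M → ℝ) → ℝ) (hf : ContDiff ℝ 1 f)
    (xt x0 : Fin M → ℝ) :
    ∑ i : Fin M, IG f xt x0 i = f xt - f x0 := by
  set L : ℝ → (Fin M → ℝ) := fun α => x0 + α • (xt - x0) with hL
  have hLcont : Continuous L := by
    apply continuous_const.add
    exact continuous_id.smul continuous_const
  have hLderiv : ∀ α : ℝ, HasDerivAt L (xt - x0) α := by
    intro α
    have h1 : HasDerivAt (fun α : ℝ => α • (xt - x0)) ((1:ℝ) • (xt - x0)) α :=
      (hasDerivAt_id α).smul_const (xt - x0)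
    have h2 := h1.const_add x0
    rw [one_smul] at h2
    exact h2
  have hfd : Continuous (fun y => fderiv ℝ f y) := hf.continuous_fderiv one_ne_zero
  have hcont : ∀ i : Fin M, Continuous (fun α => partialDeriv' f i (L α)) := by
    intro i
    exact ((hfd.comp hLcont).clm_apply continuous_const)
  have hcont2 : Continuous (fun α => fderiv ℝ f (L α) (xt - x0)) :=
    (hfd.comp hLcont).clm_apply continuous_const
  have key : ∀ y : Fin M → ℝ,
      ∑ i : Fin M, (xt i - x0 i) * fderiv ℝ f y (Pi.single i 1)
        = fderiv ℝ f y (xt - x0) := by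
    intro y
    have hx : (xt - x0) = ∑ i : Fin M, (xt i - x0 i) • (Pi.single i (1:ℝ) : Fin M → ℝ) := by
      funext j
      simp [Finset.sum_apply, Pi.single_apply, Finset.sum_ite_eq']
    conv_rhs => rw [hx]
    rw [map_sum]
    simp [smul_eq_mul]
  calc ∑ i : Fin M, IG f xt x0 i
      = ∫ α in (0:ℝ)..1, ∑ i : Fin M, (xt i - x0 i) * partialDeriv' f i (L α) := by
        rw [intervalIntegral.integral_finset_sum]
        · refine Finset.sum_congr rfl fun i _ => ?_
          rw [IG, ← intervalIntegral.integral_const_mul]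
        · intro i _
          exact (continuous_const.mul (hcont i)).intervalIntegrable 0 1
    _ = ∫ α in (0:ℝ)..1, fderiv ℝ f (L α) (xt - x0) := by
        refine intervalIntegral.integral_congr fun α _ => ?_
        exact key (L α)
    _ = f (L 1) - f (L 0) := by
        apply intervalIntegral.integral_eq_sub_of_hasDerivAt (f := fun α => f (L α))
        · intro α _
          exact ((hf.differentiable one_ne_zero (L α)).hasFDerivAt).comp_hasDerivAt α (hLderiv α)
        · exact hcont2.intervalIntegrable 0 1
    _ = f xt - f x0 := by simp [hL]
end

section
/- Let f(x) = c + bᵀx + ½ xᵀA x be a quadratic polynomial on ℝ^M with A symmetric, and let P be a probability measure on ℝ^M with finite second moments. Writing Δ = x^t − x for x distributed according to P and ⟨·⟩ for expectation under P, the Shapley value admits the exact closed form SV_i(x^t) = ⟨Δ_i⟩ · ∂f(x^t)/∂x_i − ½ Σ_{k=1}^M ⟨Δ_i Δ_k⟩ · A_{ik} for every i, where ∂f(x^t)/∂x_i = b_i + (A x^t)_i and A_{ik} = ∂²f/∂x_i∂x_k. -/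
open MeasureTheory Finset

lemma sum_split {M : ℕ} (i : Fin M) (g : Fin M → ℝ) :
    ∑ j : Fin M, g j = g i + ∑ j ∈ univ.erase i, g j :=
  (Finset.add_sum_erase univ g (mem_univ i)).symm


lemma quadf_eval {M : ℕ} (c : ℝ) (b : Fin M → ℝ) (A : Matrix (Fin M) (Fin M) ℝ)
    (hA : A.IsSymm) (z : Fin M → ℝ) (i : Fin M) (t : ℝ) (u : Fin M → ℝ)
    (hu : ∀ j ∈ univ.erase i, u j = z j) (hui : u i = t) :
    quadf c b A u
      = c + b i * t + (∑ j ∈ univ.erase i, b j * z j)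
        + (1/2) * (t * A i i * t + t * (∑ k ∈ univ.erase i, A i k * z k)
            + ((∑ k ∈ univ.erase i, A i k * z k) * t
              + ∑ j ∈ univ.erase i, ∑ k ∈ univ.erase i, z j * A j k * z k)) := by
  have hsym : ∀ j, A j i = A i j := fun j => hA.apply i j
  unfold quadf
  rw [sum_split i (fun j => b j * u j),
      sum_split i (fun j => ∑ k : Fin M, u j * A j k * u k),
      sum_split i (fun k => u i * A i k * u k), hui]
  have h1 : ∑ j ∈ univ.erase i, b j * u j = ∑ j ∈ univ.erase i, b j * z j :=
    Finset.sum_congr rfl fun j hj => by rw [hu j hj]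
  have h2 : ∑ k ∈ univ.erase i, t * A i k * u k
      = t * ∑ k ∈ univ.erase i, A i k * z k := by
    rw [Finset.mul_sum]
    exact Finset.sum_congr rfl fun k hk => by rw [hu k hk]; ring
  have h3 : ∑ j ∈ univ.erase i, ∑ k : Fin M, u j * A j k * u k
      = (∑ k ∈ univ.erase i, A i k * z k) * t
        + ∑ j ∈ univ.erase i, ∑ k ∈ univ.erase i, z j * A j k * z k := by
    rw [Finset.sum_mul, ← Finset.sum_add_distrib]
    refine Finset.sum_congr rfl fun j hj => ?_
    rw [sum_split i (fun k => u j * A j k * u k), hu j hj, hui, hsym j]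
    have : ∑ k ∈ univ.erase i, z j * A j k * u k
        = ∑ k ∈ univ.erase i, z j * A j k * z k :=
      Finset.sum_congr rfl fun k hk => by rw [hu k hk]
    rw [this]; ring
  rw [h1, h2, h3]
  ring


lemma point_diff {M : ℕ} (c : ℝ) (b : Fin M → ℝ) (A : Matrix (Fin M) (Fin M) ℝ)
    (hA : A.IsSymm) (xt x : Fin M → ℝ) (i : Fin M) (S : Finset (Fin M))
    (hS : S ⊆ univ.erase i) :
    quadf c b A (subst xt x (insert i S)) - quadf c b A (subst xt x S)
      = (xt i - x i) * (b i + ∑ j : Fin M, A i j * xt j)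
        - (1/2) * (((xt i - x i) * (xt i - x i)) * A i i)
        - ∑ k ∈ (univ.erase i) \ S, ((xt i - x i) * (xt k - x k)) * A i k := by
  have hiS : i ∉ S := fun h => (Finset.notMem_erase i univ) (hS h)
  set z := subst xt x S with hz
  have hzi : z i = x i := by simp [hz, subst, hiS]
  have hins : ∀ j ∈ univ.erase i, subst xt x (insert i S) j = z j := by
    intro j hj
    simp [subst, Finset.mem_insert, Finset.ne_of_mem_erase hj, hz]
  have hinsi : subst xt x (insert i S) i = xt i := by simp [subst]
  rw [quadf_eval c b A hA z i (xt i) _ hins hinsi,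
      quadf_eval c b A hA z i (x i) z (fun j _ => rfl) hzi]
  have hS1 : ∑ k ∈ univ.erase i, A i k * z k
      = (∑ k ∈ univ.erase i, A i k * xt k)
        - ∑ k ∈ (univ.erase i) \ S, A i k * (xt k - x k) := by
    rw [← Finset.sum_sdiff hS (f := fun k => A i k * z k),
        ← Finset.sum_sdiff hS (f := fun k => A i k * xt k)]
    have e1 : ∑ k ∈ S, A i k * z k = ∑ k ∈ S, A i k * xt k :=
      Finset.sum_congr rfl fun k hk => by simp [hz, subst, hk]
    have e2 : ∑ k ∈ (univ.erase i) \ S, A i k * z k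
        = ∑ k ∈ (univ.erase i) \ S, A i k * x k :=
      Finset.sum_congr rfl fun k hk => by simp [hz, subst, (Finset.mem_sdiff.1 hk).2]
    have e3 : ∑ k ∈ (univ.erase i) \ S, A i k * xt k
        - ∑ k ∈ (univ.erase i) \ S, A i k * (xt k - x k)
        = ∑ k ∈ (univ.erase i) \ S, A i k * x k := by
      rw [← Finset.sum_sub_distrib]
      exact Finset.sum_congr rfl fun k _ => by ring
    rw [e1, e2]
    linarith [e3]
  have hfull : ∑ j : Fin M, A i j * xt j
      = A i i * xt i + ∑ j ∈ univ.erase i, A i j * xt j := sum_split i _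
  have hfac : ∑ k ∈ (univ.erase i) \ S, ((xt i - x i) * (xt k - x k)) * A i k
      = (xt i - x i) * ∑ k ∈ (univ.erase i) \ S, A i k * (xt k - x k) := by
    rw [Finset.mul_sum]
    exact Finset.sum_congr rfl fun k _ => by ring
  rw [hS1, hfull, hfac]
  ring


lemma integrable_quadf_subst {M : ℕ} (c : ℝ) (b : Fin M → ℝ)
    (A : Matrix (Fin M) (Fin M) ℝ) (P : Measure (Fin M → ℝ)) [IsProbabilityMeasure P]
    (hmom1 : ∀ i : Fin M, Integrable (fun x : Fin M → ℝ => x i) P)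
    (hmom2 : ∀ i j : Fin M, Integrable (fun x : Fin M → ℝ => x i * x j) P)
    (xt : Fin M → ℝ) (T : Finset (Fin M)) :
    Integrable (fun x => quadf c b A (subst xt x T)) P := by
  have hsub : ∀ j, Integrable (fun x : Fin M → ℝ => subst xt x T j) P := by
    intro j
    by_cases h : j ∈ T
    · simp only [subst, h, if_true]; exact integrable_const _
    · simp only [subst, h, if_false]; exact hmom1 j
  have hsub2 : ∀ j k, Integrable (fun x : Fin M → ℝ => subst xt x T j * subst xt x T k) P := by
    intro j k
    by_cases hj : j ∈ T <;> by_cases hk : k ∈ T <;>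
      simp only [subst, hj, hk, if_true, if_false]
    exacts [integrable_const _, (hmom1 k).const_mul _, (hmom1 j).mul_const _, hmom2 j k]
  simp only [quadf]
  refine (((integrable_const c).add ?_).add ?_)
  · exact integrable_finset_sum _ fun j _ => (hsub j).const_mul (b j)
  · refine Integrable.const_mul ?_ _
    refine integrable_finset_sum _ fun j _ => integrable_finset_sum _ fun k _ => ?_
    have := (hsub2 j k).mul_const (A j k)
    exact this.congr (Filter.Eventually.of_forall fun x => by ring)


lemma marginal {M : ℕ} (c : ℝ) (b : Fin M → ℝ) (A : Matrix (Fin M) (Fin M) ℝ)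
    (hA : A.IsSymm) (P : Measure (Fin M → ℝ)) [IsProbabilityMeasure P]
    (hmom1 : ∀ i : Fin M, Integrable (fun x : Fin M → ℝ => x i) P)
    (hmom2 : ∀ i j : Fin M, Integrable (fun x : Fin M → ℝ => x i * x j) P)
    (xt : Fin M → ℝ) (i : Fin M) (S : Finset (Fin M)) (hS : S ⊆ univ.erase i) :
    condSub (quadf c b A) P xt (insert i S) - condSub (quadf c b A) P xt S
      = (∫ x, (xt i - x i) ∂P) * (b i + ∑ j : Fin M, A i j * xt j)
        - (1/2) * ((∫ x, (xt i - x i) * (xt i - x i) ∂P) * A i i)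
        - ∑ k ∈ (univ.erase i) \ S, (∫ x, (xt i - x i) * (xt k - x k) ∂P) * A i k := by
  have hΔ : Integrable (fun x : Fin M → ℝ => xt i - x i) P :=
    (integrable_const _).sub (hmom1 i)
  have hΔΔ : ∀ k, Integrable (fun x : Fin M → ℝ => (xt i - x i) * (xt k - x k)) P := by
    intro k
    have h : (fun x : Fin M → ℝ => (xt i - x i) * (xt k - x k))
        = fun x : Fin M → ℝ => xt i * xt k - xt i * x k - x i * xt k + x i * x k :=
      funext fun x => by ring
    rw [h]
    exact (((integrable_const _).sub ((hmom1 k).const_mul _)).sub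
      ((hmom1 i).mul_const _)).add (hmom2 i k)
  unfold condSub
  rw [← integral_sub (integrable_quadf_subst c b A P hmom1 hmom2 xt _)
        (integrable_quadf_subst c b A P hmom1 hmom2 xt _)]
  rw [integral_congr_ae (Filter.Eventually.of_forall fun x =>
        point_diff c b A hA xt x i S hS)]
  rw [integral_sub (by exact (hΔ.mul_const _).sub (((hΔΔ i).mul_const _).const_mul _))
        (integrable_finset_sum _ fun k _ => (hΔΔ k).mul_const _),
      integral_sub (hΔ.mul_const _) (((hΔΔ i).mul_const _).const_mul _),
      integral_finset_sum _ (fun k _ => (hΔΔ k).mul_const _),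
      integral_mul_const, integral_const_mul, integral_mul_const]
  congr 1
  exact Finset.sum_congr rfl fun k _ => integral_mul_const _ _


/-- for a quadratic polynomial `f(x) = c + bᵀx + ½ xᵀA x` with `A` symmetric
and a probability measure `P` with finite second moments, writing `Δ = x^t − x` for `x ~ P`,
the Shapley value has the exact closed form
`SV_i(x^t) = ⟨Δ_i⟩·∂f(x^t)/∂x_i − ½ Σ_k ⟨Δ_i Δ_k⟩·A_{ik}` with
`∂f(x^t)/∂x_i = b_i + (A x^t)_i` and `A_{ik} = ∂²f/∂x_i∂x_k`. -/
theorem sv_quadratic_closed_form {M : ℕ} (c : ℝ) (b : Fin M → ℝ)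
    (A : Matrix (Fin M) (Fin M) ℝ) (hA : A.IsSymm)
    (P : Measure (Fin M → ℝ)) [IsProbabilityMeasure P]
    (hmom1 : ∀ i : Fin M, Integrable (fun x : Fin M → ℝ => x i) P)
    (hmom2 : ∀ i j : Fin M, Integrable (fun x : Fin M → ℝ => x i * x j) P)
    (xt : Fin M → ℝ) (i : Fin M) :
    SV (quadf c b A) P xt i
      = (∫ x, (xt i - x i) ∂P) * (b i + ∑ j : Fin M, A i j * xt j)
        - (1 / 2) * ∑ k : Fin M, (∫ x, (xt i - x i) * (xt k - x k) ∂P) * A i k := by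
  set V : Fin M → ℝ := fun k => (∫ x, (xt i - x i) * (xt k - x k) ∂P) * A i k with hV
  set C : ℝ := (∫ x, (xt i - x i) ∂P) * (b i + ∑ j : Fin M, A i j * xt j)
      - (1/2) * ((∫ x, (xt i - x i) * (xt i - x i) ∂P) * A i i) with hC
  set T : ℝ := ∑ j ∈ univ.erase i, V j with hT
  -- target rewriting
  have htarget : (∫ x, (xt i - x i) ∂P) * (b i + ∑ j : Fin M, A i j * xt j)
      - (1 / 2) * ∑ k : Fin M, (∫ x, (xt i - x i) * (xt k - x k) ∂P) * A i k
      = C - (1/2) * T := by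
    rw [hC, hT, sum_split i V]
    simp only [hV]
    ring
  rw [htarget]
  -- inner sum computation
  have hcard1 : ((univ : Finset (Fin M)).erase i).card = M - 1 := by
    rw [Finset.card_erase_of_mem (mem_univ i), Finset.card_univ, Fintype.card_fin]
  have hinner : ∀ k ∈ range M,
      ∑ S ∈ ((univ : Finset (Fin M)).erase i).powersetCard k,
        (condSub (quadf c b A) P xt (insert i S) - condSub (quadf c b A) P xt S)
      = ((M-1).choose k : ℝ) * C - ((M-2).choose k : ℝ) * T := by
    intro k hk
    have h1 : ∀ S ∈ ((univ : Finset (Fin M)).erase i).powersetCard k,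
        condSub (quadf c b A) P xt (insert i S) - condSub (quadf c b A) P xt S
        = C - ∑ j ∈ (univ.erase i) \ S, V j := by
      intro S hS
      rw [marginal c b A hA P hmom1 hmom2 xt i S (Finset.mem_powersetCard.1 hS).1]
    rw [Finset.sum_congr rfl h1, Finset.sum_sub_distrib, Finset.sum_const,
        Finset.card_powersetCard, hcard1, nsmul_eq_mul]
    congr 1
    -- double sum swap
    have h2 : ∀ S ∈ ((univ : Finset (Fin M)).erase i).powersetCard k,
        ∑ j ∈ (univ.erase i) \ S, V j
          = ∑ j ∈ univ.erase i, if j ∉ S then V j else 0 := by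
      intro S _
      rw [Finset.sdiff_eq_filter, Finset.sum_filter]
    rw [Finset.sum_congr rfl h2, Finset.sum_comm]
    have h3 : ∀ j ∈ univ.erase i,
        ∑ S ∈ ((univ : Finset (Fin M)).erase i).powersetCard k,
          (if j ∉ S then V j else 0) = ((M-2).choose k : ℝ) * V j := by
      intro j hj
      rw [← Finset.sum_filter]
      have hfilt : (((univ : Finset (Fin M)).erase i).powersetCard k).filter (fun S => j ∉ S)
          = ((univ.erase i).erase j).powersetCard k := by
        ext S
        simp only [Finset.mem_filter, Finset.mem_powersetCard, Finset.subset_erase]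
        tauto
      rw [hfilt, Finset.sum_const, Finset.card_powersetCard,
          Finset.card_erase_of_mem hj, hcard1, nsmul_eq_mul, show M - 1 - 1 = M - 2 from by omega]
    rw [Finset.sum_congr rfl h3, ← Finset.mul_sum]
  unfold SV
  rw [Finset.sum_congr rfl fun k hk => by rw [hinner k hk]]
  have hM : 0 < M := i.pos
  -- split the sum
  rw [Finset.sum_congr rfl (fun k hk => mul_sub (((M-1).choose k : ℝ)⁻¹) _ _),
      Finset.sum_sub_distrib]
  have hone : ∀ k ∈ range M, ((M-1).choose k : ℝ)⁻¹ * (((M-1).choose k : ℝ) * C) = C := by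
    intro k hk
    have hk' : k ≤ M - 1 := by have := Finset.mem_range.1 hk; omega
    have : ((M-1).choose k : ℝ) ≠ 0 := Nat.cast_ne_zero.2 (Nat.choose_pos hk').ne'
    rw [← mul_assoc, inv_mul_cancel₀ this, one_mul]
  rw [Finset.sum_congr rfl hone, Finset.sum_const, Finset.card_range, nsmul_eq_mul]
  -- remaining: (1/M) * (M*C - Σ_k w_k * T) = C - (1/2) T
  rcases Nat.lt_or_ge M 2 with hM2 | hM2
  · -- M = 1
    have hM1 : M = 1 := by omega
    subst hM1
    have hT0 : T = 0 := by
      rw [hT]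
      have he : (univ : Finset (Fin 1)).erase i = ∅ := by
        apply Finset.eq_empty_of_forall_notMem
        intro j hj
        exact (Finset.ne_of_mem_erase hj) (Subsingleton.elim j i)
      rw [he, Finset.sum_empty]
    rw [hT0]
    simp
  · -- M ≥ 2
    obtain ⟨m, rfl⟩ : ∃ m, M = m + 2 := ⟨M - 2, by omega⟩
    have e1 : m + 2 - 1 = m + 1 := rfl
    have e2 : m + 2 - 2 = m := rfl
    rw [e1, e2]
    have hne2 : ((m : ℝ) + 1) ≠ 0 := by positivity
    have hscal : ∀ k ∈ range (m+2),
        ((m+1).choose k : ℝ)⁻¹ * ((m.choose k : ℝ) * T)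
          = ((m+1-k : ℕ) : ℝ) / (m+1) * T := by
      intro k hk
      have hk' : k ≤ m + 1 := by have := Finset.mem_range.1 hk; omega
      have hne : ((m+1).choose k : ℝ) ≠ 0 := Nat.cast_ne_zero.2 (Nat.choose_pos hk').ne'
      have hid : (m.choose k : ℝ) * ((m:ℝ)+1) = ((m+1).choose k : ℝ) * ((m+1-k : ℕ) : ℝ) := by
        exact_mod_cast congrArg (Nat.cast : ℕ → ℝ) (Nat.choose_mul_succ_eq m k)
      have hs : ((m+1).choose k : ℝ)⁻¹ * (m.choose k : ℝ) = ((m+1-k : ℕ) : ℝ) / (m+1) := by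
        rw [inv_mul_eq_div, div_eq_div_iff hne hne2]
        linarith [hid]
      rw [← mul_assoc, hs]
    rw [Finset.sum_congr rfl hscal, ← Finset.sum_mul, ← Finset.sum_div]
    have hgauss : ∑ k ∈ range (m+2), ((m+1-k : ℕ) : ℝ) = ((m:ℝ)+2) * ((m:ℝ)+1) / 2 := by
      rw [← Nat.cast_sum]
      have hre : ∑ k ∈ range (m+2), (m+1-k) = ∑ k ∈ range (m+2), k :=
        Finset.sum_range_reflect (fun j => j) (m+2)
      have hg := Finset.sum_range_id_mul_two (m+2)
      have : (∑ k ∈ range (m+2), (m+1-k)) * 2 = (m+2) * (m+1) := by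
        rw [hre]
        simpa using hg
      have hc : ((∑ k ∈ range (m+2), (m+1-k) : ℕ) : ℝ) * 2 = ((m:ℝ)+2) * ((m:ℝ)+1) := by
        exact_mod_cast congrArg (Nat.cast : ℕ → ℝ) this
      linarith
    rw [hgauss]
    have hMne : ((m:ℝ)+2) ≠ 0 := by positivity
    push_cast
    field_simp
end
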